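/- Fix an integer n ≥ 1. There exist bivariate real polynomials R_i^-(x,y) and R_i^+(x,y) for each 2 ≤ i ≤ n, with total degree at most i and coefficients depending only on n, such that the following holds: for any real numbers t_0, t_1, ..., t_n with t_0 > 0 satisfying, for every 1 ≤ i ≤ n, 0 ≤ Σ_{j=0}^{i} binom(i,j) (n+1)^{i-j} t_j ≤ ( (n+1) t_0 + t_1 )^i / t_0^{i-1}, one has for every 2 ≤ i ≤ n: R_i^-(t_0, t_1) ≤ t_i · t_0^{i-1} ≤ R_i^+(t_0, t_1). -/

import Mathlib

open Finset in
lemma binom_inv (x : ℝ) (t : ℕ → ℝ) (i : ℕ) :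
    ∑ j ∈ Finset.range (i+1), (i.choose j : ℝ) * (-x)^(i-j) *
      (∑ k ∈ Finset.range (j+1), (j.choose k : ℝ) * x^(j-k) * t k) = t i := by
  have h1 : ∑ j ∈ Finset.range (i+1), (i.choose j : ℝ) * (-x)^(i-j) *
      (∑ k ∈ Finset.range (j+1), (j.choose k : ℝ) * x^(j-k) * t k)
      = ∑ j ∈ Finset.Ico 0 (i+1), ∑ k ∈ Finset.Ico 0 (j+1),
          (i.choose j : ℝ) * (-x)^(i-j) * ((j.choose k : ℝ) * x^(j-k) * t k) := by
    simp only [Finset.range_eq_Ico, Finset.mul_sum]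
  rw [h1, ← Finset.sum_Ico_Ico_comm 0 (i+1)
    (fun k j => (i.choose j : ℝ) * (-x)^(i-j) * ((j.choose k : ℝ) * x^(j-k) * t k))]
  -- now goal: ∑ k ∈ Ico 0 (i+1), ∑ j ∈ Ico k (i+1), ... = t i
  have key : ∀ k ∈ Finset.Ico 0 (i+1),
      (∑ j ∈ Finset.Ico k (i+1), (i.choose j : ℝ) * (-x)^(i-j) * ((j.choose k : ℝ) * x^(j-k) * t k))
      = (if k = i then t i else 0) := by
    intro k hk
    rw [Finset.mem_Ico] at hk
    have hki : k ≤ i := by omega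
    have inner : ∀ j ∈ Finset.Ico k (i+1),
        (i.choose j : ℝ) * (-x)^(i-j) * ((j.choose k : ℝ) * x^(j-k) * t k)
        = (i.choose k : ℝ) * t k * (((i-k).choose (j-k) : ℝ) * x^(j-k) * (-x)^((i-k)-(j-k))) := by
      intro j hj
      rw [Finset.mem_Ico] at hj
      have h1 : (i.choose j : ℝ) * (j.choose k : ℝ) = (i.choose k : ℝ) * ((i-k).choose (j-k) : ℝ) := by
        rw [← Nat.cast_mul, ← Nat.cast_mul, Nat.choose_mul hj.1]
      have h2 : i - j = (i-k) - (j-k) := by omega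
      rw [h2]
      linear_combination ((-x)^((i-k)-(j-k)) * x^(j-k) * t k) * h1
    rw [Finset.sum_congr rfl inner, ← Finset.mul_sum]
    have hre : ∑ j ∈ Finset.Ico k (i+1), (((i-k).choose (j-k) : ℝ) * x^(j-k) * (-x)^((i-k)-(j-k)))
        = ∑ m ∈ Finset.range ((i-k)+1), (((i-k).choose m : ℝ) * x^m * (-x)^((i-k)-m)) := by
      rw [Finset.sum_Ico_eq_sum_range]
      have he : i + 1 - k = (i - k) + 1 := by omega
      rw [he]
      refine Finset.sum_congr rfl fun m hm => ?_
      have he2 : k + m - k = m := by omega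
      rw [he2]
    rw [hre]
    have hb : ∑ m ∈ Finset.range ((i-k)+1), (((i-k).choose m : ℝ) * x^m * (-x)^((i-k)-m))
        = (x + (-x))^(i-k) := by
      rw [add_pow]
      refine Finset.sum_congr rfl fun m hm => by ring
    rw [hb]
    simp only [add_neg_cancel]
    by_cases h : k = i
    · simp [h]
    · have : i - k ≠ 0 := by omega
      simp [h, zero_pow this]
  rw [Finset.sum_congr rfl key]
  simp

/-- Arithmetic content of Theorem B(2): there exist bivariate polynomials `R i ^-`, `R i ^+`
(for `2 ≤ i ≤ n`) of total degree at most `i`, depending only on `n`, such that for any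
real numbers `t 0 > 0, t 1, ..., t n` satisfying, for every `1 ≤ i ≤ n`,
`0 ≤ Σ_{j=0}^{i} (i.choose j) (n+1)^(i-j) t j ≤ ((n+1) t 0 + t 1)^i / (t 0)^(i-1)`,
one has `R_i^-(t 0, t 1) ≤ t i * (t 0)^(i-1) ≤ R_i^+(t 0, t 1)` for every `2 ≤ i ≤ n`. -/
theorem exists_power_bound_polynomials (n : ℕ) (hn : 1 ≤ n) :
    ∃ Rm Rp : ℕ → MvPolynomial (Fin 2) ℝ,
      (∀ i, 2 ≤ i → i ≤ n → (Rm i).totalDegree ≤ i ∧ (Rp i).totalDegree ≤ i) ∧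
      ∀ t : ℕ → ℝ, 0 < t 0 →
        (∀ i, 1 ≤ i → i ≤ n →
          0 ≤ ∑ j ∈ Finset.range (i + 1),
                (i.choose j : ℝ) * ((n : ℝ) + 1) ^ (i - j) * t j ∧
          (∑ j ∈ Finset.range (i + 1),
                (i.choose j : ℝ) * ((n : ℝ) + 1) ^ (i - j) * t j) ≤
            (((n : ℝ) + 1) * t 0 + t 1) ^ i / (t 0) ^ (i - 1)) →
        ∀ i, 2 ≤ i → i ≤ n →
          MvPolynomial.eval ![t 0, t 1] (Rm i) ≤ t i * (t 0) ^ (i - 1) ∧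
          t i * (t 0) ^ (i - 1) ≤ MvPolynomial.eval ![t 0, t 1] (Rp i) := by
  set x : ℝ := (n : ℝ) + 1 with hx
  have hx0 : 0 < x := by positivity
  set P : ℕ → MvPolynomial (Fin 2) ℝ :=
    fun i => (MvPolynomial.C (2 * x) * MvPolynomial.X 0 + MvPolynomial.X 1) ^ i with hP
  refine ⟨fun i => -P i, P, ?_, ?_⟩
  · intro i hi2 hin
    have hdeg : (P i).totalDegree ≤ i := by
      calc (P i).totalDegree ≤ i * (MvPolynomial.C (2 * x) * MvPolynomial.X 0
            + MvPolynomial.X 1 : MvPolynomial (Fin 2) ℝ).totalDegree :=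
            MvPolynomial.totalDegree_pow _ _
        _ ≤ i * 1 := by
            refine Nat.mul_le_mul_left i ?_
            refine le_trans (MvPolynomial.totalDegree_add _ _) (max_le ?_ ?_)
            · refine le_trans (MvPolynomial.totalDegree_mul _ _) ?_
              rw [MvPolynomial.totalDegree_C, MvPolynomial.totalDegree_X]
            · rw [MvPolynomial.totalDegree_X]
        _ = i := Nat.mul_one i
    exact ⟨by simpa using hdeg, hdeg⟩
  · intro t ht0 hyp i hi2 hin
    set s : ℕ → ℝ := fun j => ∑ k ∈ Finset.range (j+1), (j.choose k : ℝ) * x^(j-k) * t k with hs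
    set a : ℝ := x * t 0 + t 1 with haa
    have hs1 : s 1 = a := by
      simp [hs, Finset.sum_range_succ, haa]
    have ha : 0 ≤ a := by
      have := (hyp 1 le_rfl hn).1
      rw [← hs1]; exact this
    -- key bound on s j * t0^(i-1)
    have key : ∀ j, j ≤ i →
        0 ≤ s j * (t 0)^(i-1) ∧ s j * (t 0)^(i-1) ≤ a^j * (t 0)^(i-j) := by
      intro j hj
      rcases Nat.eq_zero_or_pos j with hj0 | hj1
      · subst hj0
        have hs0 : s 0 = t 0 := by simp [hs]
        rw [hs0]
        constructor
        · positivity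
        ·
          have : t 0 * t 0 ^ (i - 1) = t 0 ^ i := by
            rw [← pow_succ']
            congr 1
            omega
          rw [this]
          simp
      · have hjn : j ≤ n := le_trans hj hin
        obtain ⟨h0, h1⟩ := hyp j hj1 hjn
        constructor
        · exact mul_nonneg h0 (by positivity)
        · have hsplit : (t 0)^(i-1) = (t 0)^(j-1) * (t 0)^(i-j) := by
            rw [← pow_add]
            congr 1
            omega
          rw [hsplit, ← mul_assoc]
          have h2 : s j * (t 0)^(j-1) ≤ a^j := by
            have := mul_le_mul_of_nonneg_right h1 (le_of_lt (pow_pos ht0 (j-1)))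
            rwa [div_mul_cancel₀] at this
            positivity
          exact mul_le_mul_of_nonneg_right h2 (by positivity)
    -- the inversion identity
    have hinv : t i * (t 0)^(i-1)
        = ∑ j ∈ Finset.range (i+1), (i.choose j : ℝ) * (-x)^(i-j) * (s j * (t 0)^(i-1)) := by
      rw [← binom_inv x t i, Finset.sum_mul]
      exact Finset.sum_congr rfl fun j hj => by ring
    have habs : |t i * (t 0)^(i-1)| ≤ (2 * x * t 0 + t 1)^i := by
      calc |t i * (t 0)^(i-1)|
          ≤ ∑ j ∈ Finset.range (i+1), |(i.choose j : ℝ) * (-x)^(i-j) * (s j * (t 0)^(i-1))| := by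
            rw [hinv]; exact Finset.abs_sum_le_sum_abs _ _
        _ ≤ ∑ j ∈ Finset.range (i+1), (i.choose j : ℝ) * a^j * (x * t 0)^(i-j) := by
            refine Finset.sum_le_sum fun j hj => ?_
            rw [Finset.mem_range] at hj
            have hji : j ≤ i := by omega
            obtain ⟨k0, k1⟩ := key j hji
            rw [abs_mul, abs_mul, abs_of_nonneg k0,
              abs_of_nonneg (by positivity : (0:ℝ) ≤ (i.choose j : ℝ)),
              abs_pow, abs_neg, abs_of_pos hx0]
            calc (i.choose j : ℝ) * x^(i-j) * (s j * t 0 ^ (i-1))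
                ≤ (i.choose j : ℝ) * x^(i-j) * (a^j * t 0 ^ (i-j)) :=
                  mul_le_mul_of_nonneg_left k1 (by positivity)
              _ = (i.choose j : ℝ) * a^j * (x * t 0)^(i-j) := by rw [mul_pow]; ring
        _ = (a + x * t 0)^i := by
            rw [add_pow]
            exact Finset.sum_congr rfl fun m _ => by ring
        _ = (2 * x * t 0 + t 1)^i := by rw [haa]; ring_nf
    have heval : MvPolynomial.eval ![t 0, t 1] (P i) = (2 * x * t 0 + t 1)^i := by
      simp [hP]
    rw [abs_le] at habs
    constructor
    · simpa [heval] using habs.1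
    · simpa [heval] using habs.2
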